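/- For every odd integer L ≥ 5 and any two triples (a,b,c) and (a',b',c') of nonnegative integers with a + b + c = a' + b' + c' = (L − 5)/2, the braids δ_{a,b,c} and δ_{a',b',c'} are conjugate in the braid group B_5. -/
import Mathlib


/-- The Artin relations for the braid group with `n` generators
`σ_1, …, σ_n` (indexed by `Fin n` via `σ_{i+1} ↔ i`). -/
def braidRels (n : ℕ) : Set (FreeGroup (Fin n)) :=
  { r | ∃ i j : Fin n,
      ((i : ℕ) + 1 = (j : ℕ) ∧
        r = FreeGroup.of i * FreeGroup.of j * FreeGroup.of i *
            (FreeGroup.of j * FreeGroup.of i * FreeGroup.of j)⁻¹) ∨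
      ((i : ℕ) + 2 ≤ (j : ℕ) ∧
        r = FreeGroup.of i * FreeGroup.of j * (FreeGroup.of j * FreeGroup.of i)⁻¹) }

/-- The braid group `B_5`, presented with generators `σ_1, …, σ_4` and the Artin
relations. -/
abbrev B5 : Type := PresentedGroup (braidRels 4)

/-- The Artin generator `σ_{i+1}` of `B_5` (so `s 0 = σ_1`, …, `s 3 = σ_4`). -/
def s (i : Fin 4) : B5 := PresentedGroup.of i

/-- `X = σ1σ2σ3σ2σ4·σ2σ4σ3σ2σ1 ∈ B_5`. -/
def X : B5 := (s 0 * s 1 * s 2 * s 1 * s 3) * (s 1 * s 3 * s 2 * s 1 * s 0)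

/-- `S = σ1σ2σ3σ2·σ2σ3σ2σ1 ∈ B_5`. -/
def S : B5 := (s 0 * s 1 * s 2 * s 1) * (s 1 * s 2 * s 1 * s 0)

/-- `Y = σ1σ3 ∈ B_5`. -/
def Y : B5 := s 0 * s 2

/-- `Z = σ1σ2σ3σ2σ1·σ1σ2σ3σ2σ1 ∈ B_5`. -/
def Z : B5 := (s 0 * s 1 * s 2 * s 1 * s 0) * (s 0 * s 1 * s 2 * s 1 * s 0)

/-- The braid `δ_{a,b,c} = X·S^a·Y·S^b·Z·S^c ∈ B_5`. -/
def deltaABC (a b c : ℕ) : B5 := X * S ^ a * Y * S ^ b * Z * S ^ c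



lemma braid_rel (i j : Fin 4) (hij : (i : ℕ) + 1 = (j : ℕ)) :
    s i * s j * s i = s j * s i * s j := by
  have h : (FreeGroup.of i * FreeGroup.of j * FreeGroup.of i *
      (FreeGroup.of j * FreeGroup.of i * FreeGroup.of j)⁻¹) ∈ braidRels 4 :=
    ⟨i, j, Or.inl ⟨hij, rfl⟩⟩
  have h1 : (QuotientGroup.mk (FreeGroup.of i * FreeGroup.of j * FreeGroup.of i *
      (FreeGroup.of j * FreeGroup.of i * FreeGroup.of j)⁻¹) : B5) = 1 :=
    (QuotientGroup.eq_one_iff _).mpr (Subgroup.subset_normalClosure h)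
  simp only [QuotientGroup.mk_mul, QuotientGroup.mk_inv, mul_inv_eq_one] at h1
  exact h1

lemma comm_rel (i j : Fin 4) (hij : (i : ℕ) + 2 ≤ (j : ℕ)) :
    s i * s j = s j * s i := by
  have h : (FreeGroup.of i * FreeGroup.of j *
      (FreeGroup.of j * FreeGroup.of i)⁻¹) ∈ braidRels 4 :=
    ⟨i, j, Or.inr ⟨hij, rfl⟩⟩
  have h1 : (QuotientGroup.mk (FreeGroup.of i * FreeGroup.of j *
      (FreeGroup.of j * FreeGroup.of i)⁻¹) : B5) = 1 :=
    (QuotientGroup.eq_one_iff _).mpr (Subgroup.subset_normalClosure h)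
  simp only [QuotientGroup.mk_mul, QuotientGroup.mk_inv, mul_inv_eq_one] at h1
  exact h1



def w (l : List (Fin 4)) : B5 := (l.map s).prod

lemma w_append (u v : List (Fin 4)) : w (u ++ v) = w u * w v := by
  simp [w]

lemma wstep (u v l r : List (Fin 4)) (h : w l = w r) :
    w (u ++ l ++ v) = w (u ++ r ++ v) := by
  rw [w_append, w_append, w_append, w_append, h]

lemma wb01 : w [0,1,0] = w [1,0,1] := by
  have := braid_rel 0 1 rfl; simp only [w, List.map, List.prod_cons, List.prod_nil,
    mul_one, ← mul_assoc]; exact this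

lemma wb12 : w [1,2,1] = w [2,1,2] := by
  have := braid_rel 1 2 rfl; simp only [w, List.map, List.prod_cons, List.prod_nil,
    mul_one, ← mul_assoc]; exact this

lemma wb23 : w [2,3,2] = w [3,2,3] := by
  have := braid_rel 2 3 rfl; simp only [w, List.map, List.prod_cons, List.prod_nil,
    mul_one, ← mul_assoc]; exact this

lemma wc02 : w [0,2] = w [2,0] := by
  have := comm_rel 0 2 (by decide); simp only [w, List.map, List.prod_cons,
    List.prod_nil, mul_one, ← mul_assoc]; exact this

lemma wc03 : w [0,3] = w [3,0] := by
  have := comm_rel 0 3 (by decide); simp only [w, List.map, List.prod_cons,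
    List.prod_nil, mul_one, ← mul_assoc]; exact this

lemma wc13 : w [1,3] = w [3,1] := by
  have := comm_rel 1 3 (by decide); simp only [w, List.map, List.prod_cons,
    List.prod_nil, mul_one, ← mul_assoc]; exact this

lemma wI1 : w [2,1,1,2,1,1,0,1,2,1,3,1,3,2,1,0] = w [0,1,2,1,3,1,3,2,1,0,2,1,1,2,1,1] := by
  calc w [2,1,1,2,1,1,0,1,2,1,3,1,3,2,1,0]
    _ = w [2,1,2,1,2,1,0,1,2,1,3,1,3,2,1,0] := wstep [2,1] [1,0,1,2,1,3,1,3,2,1,0] [1,2,1] [2,1,2] wb12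
    _ = w [2,2,1,2,2,1,0,1,2,1,3,1,3,2,1,0] := wstep [2] [2,1,0,1,2,1,3,1,3,2,1,0] [1,2,1] [2,1,2] wb12
    _ = w [2,2,1,2,2,0,1,0,2,1,3,1,3,2,1,0] := wstep [2,2,1,2,2] [2,1,3,1,3,2,1,0] [1,0,1] [0,1,0] wb01.symm
    _ = w [2,2,1,2,0,2,1,0,2,1,3,1,3,2,1,0] := wstep [2,2,1,2] [1,0,2,1,3,1,3,2,1,0] [2,0] [0,2] wc02.symm
    _ = w [2,2,1,0,2,2,1,0,2,1,3,1,3,2,1,0] := wstep [2,2,1] [2,1,0,2,1,3,1,3,2,1,0] [2,0] [0,2] wc02.symm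
    _ = w [2,2,1,0,2,2,1,2,0,1,3,1,3,2,1,0] := wstep [2,2,1,0,2,2,1] [1,3,1,3,2,1,0] [0,2] [2,0] wc02
    _ = w [2,2,1,0,2,1,2,1,0,1,3,1,3,2,1,0] := wstep [2,2,1,0,2] [0,1,3,1,3,2,1,0] [2,1,2] [1,2,1] wb12.symm
    _ = w [2,2,1,0,1,2,1,1,0,1,3,1,3,2,1,0] := wstep [2,2,1,0] [1,0,1,3,1,3,2,1,0] [2,1,2] [1,2,1] wb12.symm
    _ = w [2,2,0,1,0,2,1,1,0,1,3,1,3,2,1,0] := wstep [2,2] [2,1,1,0,1,3,1,3,2,1,0] [1,0,1] [0,1,0] wb01.symm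
    _ = w [2,0,2,1,0,2,1,1,0,1,3,1,3,2,1,0] := wstep [2] [1,0,2,1,1,0,1,3,1,3,2,1,0] [2,0] [0,2] wc02.symm
    _ = w [0,2,2,1,0,2,1,1,0,1,3,1,3,2,1,0] := wstep [] [2,1,0,2,1,1,0,1,3,1,3,2,1,0] [2,0] [0,2] wc02.symm
    _ = w [0,2,2,1,2,0,1,1,0,1,3,1,3,2,1,0] := wstep [0,2,2,1] [1,1,0,1,3,1,3,2,1,0] [0,2] [2,0] wc02
    _ = w [0,2,1,2,1,0,1,1,0,1,3,1,3,2,1,0] := wstep [0,2] [0,1,1,0,1,3,1,3,2,1,0] [2,1,2] [1,2,1] wb12.symm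
    _ = w [0,1,2,1,1,0,1,1,0,1,3,1,3,2,1,0] := wstep [0] [1,0,1,1,0,1,3,1,3,2,1,0] [2,1,2] [1,2,1] wb12.symm
    _ = w [0,1,2,1,1,0,1,0,1,0,3,1,3,2,1,0] := wstep [0,1,2,1,1,0,1] [3,1,3,2,1,0] [1,0,1] [0,1,0] wb01.symm
    _ = w [0,1,2,1,1,1,0,1,1,0,3,1,3,2,1,0] := wstep [0,1,2,1,1] [1,0,3,1,3,2,1,0] [0,1,0] [1,0,1] wb01
    _ = w [0,1,2,1,1,1,0,1,1,3,0,1,3,2,1,0] := wstep [0,1,2,1,1,1,0,1,1] [1,3,2,1,0] [0,3] [3,0] wc03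
    _ = w [0,1,2,1,1,1,0,1,3,1,0,1,3,2,1,0] := wstep [0,1,2,1,1,1,0,1] [0,1,3,2,1,0] [1,3] [3,1] wc13
    _ = w [0,1,2,1,1,1,0,3,1,1,0,1,3,2,1,0] := wstep [0,1,2,1,1,1,0] [1,0,1,3,2,1,0] [1,3] [3,1] wc13
    _ = w [0,1,2,1,1,1,3,0,1,1,0,1,3,2,1,0] := wstep [0,1,2,1,1,1] [1,1,0,1,3,2,1,0] [0,3] [3,0] wc03
    _ = w [0,1,2,1,1,3,1,0,1,1,0,1,3,2,1,0] := wstep [0,1,2,1,1] [0,1,1,0,1,3,2,1,0] [1,3] [3,1] wc13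
    _ = w [0,1,2,1,1,3,1,0,1,0,1,0,3,2,1,0] := wstep [0,1,2,1,1,3,1,0,1] [3,2,1,0] [1,0,1] [0,1,0] wb01.symm
    _ = w [0,1,2,1,1,3,1,0,1,0,1,3,0,2,1,0] := wstep [0,1,2,1,1,3,1,0,1,0,1] [2,1,0] [0,3] [3,0] wc03
    _ = w [0,1,2,1,1,3,1,0,1,0,1,3,2,0,1,0] := wstep [0,1,2,1,1,3,1,0,1,0,1,3] [1,0] [0,2] [2,0] wc02
    _ = w [0,1,2,1,1,3,1,0,1,0,1,3,2,1,0,1] := wstep [0,1,2,1,1,3,1,0,1,0,1,3,2] [] [0,1,0] [1,0,1] wb01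
    _ = w [0,1,2,1,1,3,1,0,0,1,0,3,2,1,0,1] := wstep [0,1,2,1,1,3,1,0] [3,2,1,0,1] [1,0,1] [0,1,0] wb01.symm
    _ = w [0,1,2,1,1,3,1,0,0,1,3,0,2,1,0,1] := wstep [0,1,2,1,1,3,1,0,0,1] [2,1,0,1] [0,3] [3,0] wc03
    _ = w [0,1,2,1,1,3,1,0,0,1,3,2,0,1,0,1] := wstep [0,1,2,1,1,3,1,0,0,1,3] [1,0,1] [0,2] [2,0] wc02
    _ = w [0,1,2,1,1,3,1,0,0,1,3,2,1,0,1,1] := wstep [0,1,2,1,1,3,1,0,0,1,3,2] [1] [0,1,0] [1,0,1] wb01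
    _ = w [0,1,2,1,1,3,1,0,0,3,1,2,1,0,1,1] := wstep [0,1,2,1,1,3,1,0,0] [2,1,0,1,1] [1,3] [3,1] wc13
    _ = w [0,1,2,1,1,3,1,0,0,3,2,1,2,0,1,1] := wstep [0,1,2,1,1,3,1,0,0,3] [0,1,1] [1,2,1] [2,1,2] wb12
    _ = w [0,1,2,1,1,3,1,0,0,3,2,1,0,2,1,1] := wstep [0,1,2,1,1,3,1,0,0,3,2,1] [1,1] [2,0] [0,2] wc02.symm
    _ = w [0,1,2,1,1,3,1,0,3,0,2,1,0,2,1,1] := wstep [0,1,2,1,1,3,1,0] [2,1,0,2,1,1] [0,3] [3,0] wc03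
    _ = w [0,1,2,1,1,3,1,0,3,2,0,1,0,2,1,1] := wstep [0,1,2,1,1,3,1,0,3] [1,0,2,1,1] [0,2] [2,0] wc02
    _ = w [0,1,2,1,1,3,1,0,3,2,1,0,1,2,1,1] := wstep [0,1,2,1,1,3,1,0,3,2] [2,1,1] [0,1,0] [1,0,1] wb01
    _ = w [0,1,2,1,1,3,1,3,0,2,1,0,1,2,1,1] := wstep [0,1,2,1,1,3,1] [2,1,0,1,2,1,1] [0,3] [3,0] wc03
    _ = w [0,1,2,1,1,3,1,3,2,0,1,0,1,2,1,1] := wstep [0,1,2,1,1,3,1,3] [1,0,1,2,1,1] [0,2] [2,0] wc02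
    _ = w [0,1,2,1,1,3,1,3,2,1,0,1,1,2,1,1] := wstep [0,1,2,1,1,3,1,3,2] [1,2,1,1] [0,1,0] [1,0,1] wb01
    _ = w [0,1,2,1,1,3,3,1,2,1,0,1,1,2,1,1] := wstep [0,1,2,1,1,3] [2,1,0,1,1,2,1,1] [1,3] [3,1] wc13
    _ = w [0,1,2,1,1,3,3,2,1,2,0,1,1,2,1,1] := wstep [0,1,2,1,1,3,3] [0,1,1,2,1,1] [1,2,1] [2,1,2] wb12
    _ = w [0,1,2,1,1,3,3,2,1,0,2,1,1,2,1,1] := wstep [0,1,2,1,1,3,3,2,1] [1,1,2,1,1] [2,0] [0,2] wc02.symm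
    _ = w [0,1,2,1,3,1,3,2,1,0,2,1,1,2,1,1] := wstep [0,1,2,1] [3,2,1,0,2,1,1,2,1,1] [1,3] [3,1] wc13

lemma wI2 : w [2,1,1,2,1,1,0,1,2,1,1,2,1,0] = w [0,1,2,1,1,2,1,0,2,1,1,2,1,1] := by
  calc w [2,1,1,2,1,1,0,1,2,1,1,2,1,0]
    _ = w [2,1,2,1,2,1,0,1,2,1,1,2,1,0] := wstep [2,1] [1,0,1,2,1,1,2,1,0] [1,2,1] [2,1,2] wb12
    _ = w [2,2,1,2,2,1,0,1,2,1,1,2,1,0] := wstep [2] [2,1,0,1,2,1,1,2,1,0] [1,2,1] [2,1,2] wb12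
    _ = w [2,2,1,2,2,0,1,0,2,1,1,2,1,0] := wstep [2,2,1,2,2] [2,1,1,2,1,0] [1,0,1] [0,1,0] wb01.symm
    _ = w [2,2,1,2,0,2,1,0,2,1,1,2,1,0] := wstep [2,2,1,2] [1,0,2,1,1,2,1,0] [2,0] [0,2] wc02.symm
    _ = w [2,2,1,0,2,2,1,0,2,1,1,2,1,0] := wstep [2,2,1] [2,1,0,2,1,1,2,1,0] [2,0] [0,2] wc02.symm
    _ = w [2,2,1,0,2,2,1,2,0,1,1,2,1,0] := wstep [2,2,1,0,2,2,1] [1,1,2,1,0] [0,2] [2,0] wc02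
    _ = w [2,2,1,0,2,1,2,1,0,1,1,2,1,0] := wstep [2,2,1,0,2] [0,1,1,2,1,0] [2,1,2] [1,2,1] wb12.symm
    _ = w [2,2,1,0,1,2,1,1,0,1,1,2,1,0] := wstep [2,2,1,0] [1,0,1,1,2,1,0] [2,1,2] [1,2,1] wb12.symm
    _ = w [2,2,0,1,0,2,1,1,0,1,1,2,1,0] := wstep [2,2] [2,1,1,0,1,1,2,1,0] [1,0,1] [0,1,0] wb01.symm
    _ = w [2,2,0,1,2,0,1,1,0,1,1,2,1,0] := wstep [2,2,0,1] [1,1,0,1,1,2,1,0] [0,2] [2,0] wc02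
    _ = w [2,2,0,1,2,0,1,0,1,0,1,2,1,0] := wstep [2,2,0,1,2,0,1] [1,2,1,0] [1,0,1] [0,1,0] wb01.symm
    _ = w [2,2,0,1,2,0,1,0,0,1,0,2,1,0] := wstep [2,2,0,1,2,0,1,0] [2,1,0] [1,0,1] [0,1,0] wb01.symm
    _ = w [2,2,0,1,2,0,1,0,0,1,2,0,1,0] := wstep [2,2,0,1,2,0,1,0,0,1] [1,0] [0,2] [2,0] wc02
    _ = w [2,2,0,1,2,0,1,0,0,1,2,1,0,1] := wstep [2,2,0,1,2,0,1,0,0,1,2] [] [0,1,0] [1,0,1] wb01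
    _ = w [2,2,0,1,2,1,0,1,0,1,2,1,0,1] := wstep [2,2,0,1,2] [0,1,2,1,0,1] [0,1,0] [1,0,1] wb01
    _ = w [2,2,0,1,2,1,0,0,1,0,2,1,0,1] := wstep [2,2,0,1,2,1,0] [2,1,0,1] [1,0,1] [0,1,0] wb01.symm
    _ = w [2,2,0,1,2,1,0,0,1,2,0,1,0,1] := wstep [2,2,0,1,2,1,0,0,1] [1,0,1] [0,2] [2,0] wc02
    _ = w [2,2,0,1,2,1,0,0,1,2,1,0,1,1] := wstep [2,2,0,1,2,1,0,0,1,2] [1] [0,1,0] [1,0,1] wb01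
    _ = w [2,2,0,1,2,1,0,0,2,1,2,0,1,1] := wstep [2,2,0,1,2,1,0,0] [0,1,1] [1,2,1] [2,1,2] wb12
    _ = w [2,2,0,1,2,1,0,0,2,1,0,2,1,1] := wstep [2,2,0,1,2,1,0,0,2,1] [1,1] [2,0] [0,2] wc02.symm
    _ = w [2,2,0,1,2,1,0,2,0,1,0,2,1,1] := wstep [2,2,0,1,2,1,0] [1,0,2,1,1] [0,2] [2,0] wc02
    _ = w [2,2,0,1,2,1,0,2,1,0,1,2,1,1] := wstep [2,2,0,1,2,1,0,2] [2,1,1] [0,1,0] [1,0,1] wb01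
    _ = w [2,2,0,1,2,1,2,0,1,0,1,2,1,1] := wstep [2,2,0,1,2,1] [1,0,1,2,1,1] [0,2] [2,0] wc02
    _ = w [2,2,0,1,2,1,2,1,0,1,1,2,1,1] := wstep [2,2,0,1,2,1,2] [1,2,1,1] [0,1,0] [1,0,1] wb01
    _ = w [2,2,0,1,2,2,1,2,0,1,1,2,1,1] := wstep [2,2,0,1,2] [0,1,1,2,1,1] [1,2,1] [2,1,2] wb12
    _ = w [2,2,0,1,2,2,1,0,2,1,1,2,1,1] := wstep [2,2,0,1,2,2,1] [1,1,2,1,1] [2,0] [0,2] wc02.symm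
    _ = w [2,0,2,1,2,2,1,0,2,1,1,2,1,1] := wstep [2] [1,2,2,1,0,2,1,1,2,1,1] [2,0] [0,2] wc02.symm
    _ = w [2,0,1,2,1,2,1,0,2,1,1,2,1,1] := wstep [2,0] [2,1,0,2,1,1,2,1,1] [2,1,2] [1,2,1] wb12.symm
    _ = w [0,2,1,2,1,2,1,0,2,1,1,2,1,1] := wstep [] [1,2,1,2,1,0,2,1,1,2,1,1] [2,0] [0,2] wc02.symm
    _ = w [0,1,2,1,1,2,1,0,2,1,1,2,1,1] := wstep [0] [1,2,1,0,2,1,1,2,1,1] [2,1,2] [1,2,1] wb12.symm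

lemma wI3 : w [2,1,1,2,1,1,0,1,2,1,0,0,1,2,1,0] = w [0,1,2,1,0,0,1,2,1,0,2,1,1,2,1,1] := by
  calc w [2,1,1,2,1,1,0,1,2,1,0,0,1,2,1,0]
    _ = w [2,1,1,2,1,0,1,0,2,1,0,0,1,2,1,0] := wstep [2,1,1,2,1] [2,1,0,0,1,2,1,0] [1,0,1] [0,1,0] wb01.symm
    _ = w [2,1,1,2,0,1,0,0,2,1,0,0,1,2,1,0] := wstep [2,1,1,2] [0,2,1,0,0,1,2,1,0] [1,0,1] [0,1,0] wb01.symm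
    _ = w [2,1,1,2,0,1,0,2,0,1,0,0,1,2,1,0] := wstep [2,1,1,2,0,1,0] [1,0,0,1,2,1,0] [0,2] [2,0] wc02
    _ = w [2,1,1,2,0,1,2,0,0,1,0,0,1,2,1,0] := wstep [2,1,1,2,0,1] [0,1,0,0,1,2,1,0] [0,2] [2,0] wc02
    _ = w [2,1,1,2,0,1,2,0,1,0,1,0,1,2,1,0] := wstep [2,1,1,2,0,1,2,0] [0,1,2,1,0] [0,1,0] [1,0,1] wb01
    _ = w [2,1,1,2,0,1,2,1,0,1,1,0,1,2,1,0] := wstep [2,1,1,2,0,1,2] [1,0,1,2,1,0] [0,1,0] [1,0,1] wb01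
    _ = w [2,1,1,2,0,1,2,1,0,1,0,1,0,2,1,0] := wstep [2,1,1,2,0,1,2,1,0,1] [2,1,0] [1,0,1] [0,1,0] wb01.symm
    _ = w [2,1,1,2,0,1,2,1,0,0,1,0,0,2,1,0] := wstep [2,1,1,2,0,1,2,1,0] [0,2,1,0] [1,0,1] [0,1,0] wb01.symm
    _ = w [2,1,1,2,0,1,2,1,0,0,1,0,2,0,1,0] := wstep [2,1,1,2,0,1,2,1,0,0,1,0] [1,0] [0,2] [2,0] wc02
    _ = w [2,1,1,2,0,1,2,1,0,0,1,2,0,0,1,0] := wstep [2,1,1,2,0,1,2,1,0,0,1] [0,1,0] [0,2] [2,0] wc02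
    _ = w [2,1,1,2,0,1,2,1,0,0,1,2,0,1,0,1] := wstep [2,1,1,2,0,1,2,1,0,0,1,2,0] [] [0,1,0] [1,0,1] wb01
    _ = w [2,1,1,2,0,1,2,1,0,0,1,2,1,0,1,1] := wstep [2,1,1,2,0,1,2,1,0,0,1,2] [1] [0,1,0] [1,0,1] wb01
    _ = w [2,1,1,2,0,1,2,1,0,0,2,1,2,0,1,1] := wstep [2,1,1,2,0,1,2,1,0,0] [0,1,1] [1,2,1] [2,1,2] wb12
    _ = w [2,1,1,2,0,1,2,1,0,0,2,1,0,2,1,1] := wstep [2,1,1,2,0,1,2,1,0,0,2,1] [1,1] [2,0] [0,2] wc02.symm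
    _ = w [2,1,1,2,0,1,2,1,0,2,0,1,0,2,1,1] := wstep [2,1,1,2,0,1,2,1,0] [1,0,2,1,1] [0,2] [2,0] wc02
    _ = w [2,1,1,2,0,1,2,1,0,2,1,0,1,2,1,1] := wstep [2,1,1,2,0,1,2,1,0,2] [2,1,1] [0,1,0] [1,0,1] wb01
    _ = w [2,1,1,2,0,1,2,1,2,0,1,0,1,2,1,1] := wstep [2,1,1,2,0,1,2,1] [1,0,1,2,1,1] [0,2] [2,0] wc02
    _ = w [2,1,1,2,0,1,2,1,2,1,0,1,1,2,1,1] := wstep [2,1,1,2,0,1,2,1,2] [1,2,1,1] [0,1,0] [1,0,1] wb01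
    _ = w [2,1,1,2,0,1,2,2,1,2,0,1,1,2,1,1] := wstep [2,1,1,2,0,1,2] [0,1,1,2,1,1] [1,2,1] [2,1,2] wb12
    _ = w [2,1,1,2,0,1,2,2,1,0,2,1,1,2,1,1] := wstep [2,1,1,2,0,1,2,2,1] [1,1,2,1,1] [2,0] [0,2] wc02.symm
    _ = w [2,1,1,0,2,1,2,2,1,0,2,1,1,2,1,1] := wstep [2,1,1] [1,2,2,1,0,2,1,1,2,1,1] [2,0] [0,2] wc02.symm
    _ = w [2,1,1,0,1,2,1,2,1,0,2,1,1,2,1,1] := wstep [2,1,1,0] [2,1,0,2,1,1,2,1,1] [2,1,2] [1,2,1] wb12.symm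
    _ = w [2,1,0,1,0,2,1,2,1,0,2,1,1,2,1,1] := wstep [2,1] [2,1,2,1,0,2,1,1,2,1,1] [1,0,1] [0,1,0] wb01.symm
    _ = w [2,1,0,1,2,0,1,2,1,0,2,1,1,2,1,1] := wstep [2,1,0,1] [1,2,1,0,2,1,1,2,1,1] [0,2] [2,0] wc02
    _ = w [2,0,1,0,2,0,1,2,1,0,2,1,1,2,1,1] := wstep [2] [2,0,1,2,1,0,2,1,1,2,1,1] [1,0,1] [0,1,0] wb01.symm
    _ = w [2,0,1,2,0,0,1,2,1,0,2,1,1,2,1,1] := wstep [2,0,1] [0,1,2,1,0,2,1,1,2,1,1] [0,2] [2,0] wc02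
    _ = w [0,2,1,2,0,0,1,2,1,0,2,1,1,2,1,1] := wstep [] [1,2,0,0,1,2,1,0,2,1,1,2,1,1] [2,0] [0,2] wc02.symm
    _ = w [0,1,2,1,0,0,1,2,1,0,2,1,1,2,1,1] := wstep [0] [0,0,1,2,1,0,2,1,1,2,1,1] [2,1,2] [1,2,1] wb12.symm

lemma wI4 : w [2,1,1,2,1,1,0,1,2,1,1,2,1,0,0,2] = w [0,2,0,1,2,1,1,2,1,0,2,1,1,2,1,1] := by
  calc w [2,1,1,2,1,1,0,1,2,1,1,2,1,0,0,2]
    _ = w [2,1,2,1,2,1,0,1,2,1,1,2,1,0,0,2] := wstep [2,1] [1,0,1,2,1,1,2,1,0,0,2] [1,2,1] [2,1,2] wb12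
    _ = w [2,2,1,2,2,1,0,1,2,1,1,2,1,0,0,2] := wstep [2] [2,1,0,1,2,1,1,2,1,0,0,2] [1,2,1] [2,1,2] wb12
    _ = w [2,2,1,2,2,0,1,0,2,1,1,2,1,0,0,2] := wstep [2,2,1,2,2] [2,1,1,2,1,0,0,2] [1,0,1] [0,1,0] wb01.symm
    _ = w [2,2,1,2,0,2,1,0,2,1,1,2,1,0,0,2] := wstep [2,2,1,2] [1,0,2,1,1,2,1,0,0,2] [2,0] [0,2] wc02.symm
    _ = w [2,2,1,0,2,2,1,0,2,1,1,2,1,0,0,2] := wstep [2,2,1] [2,1,0,2,1,1,2,1,0,0,2] [2,0] [0,2] wc02.symm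
    _ = w [2,2,1,0,2,2,1,2,0,1,1,2,1,0,0,2] := wstep [2,2,1,0,2,2,1] [1,1,2,1,0,0,2] [0,2] [2,0] wc02
    _ = w [2,2,1,0,2,1,2,1,0,1,1,2,1,0,0,2] := wstep [2,2,1,0,2] [0,1,1,2,1,0,0,2] [2,1,2] [1,2,1] wb12.symm
    _ = w [2,2,1,0,1,2,1,1,0,1,1,2,1,0,0,2] := wstep [2,2,1,0] [1,0,1,1,2,1,0,0,2] [2,1,2] [1,2,1] wb12.symm
    _ = w [2,2,0,1,0,2,1,1,0,1,1,2,1,0,0,2] := wstep [2,2] [2,1,1,0,1,1,2,1,0,0,2] [1,0,1] [0,1,0] wb01.symm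
    _ = w [2,0,2,1,0,2,1,1,0,1,1,2,1,0,0,2] := wstep [2] [1,0,2,1,1,0,1,1,2,1,0,0,2] [2,0] [0,2] wc02.symm
    _ = w [0,2,2,1,0,2,1,1,0,1,1,2,1,0,0,2] := wstep [] [2,1,0,2,1,1,0,1,1,2,1,0,0,2] [2,0] [0,2] wc02.symm
    _ = w [0,2,2,1,0,2,1,0,1,0,1,2,1,0,0,2] := wstep [0,2,2,1,0,2,1] [1,2,1,0,0,2] [1,0,1] [0,1,0] wb01.symm
    _ = w [0,2,2,1,0,2,1,0,0,1,0,2,1,0,0,2] := wstep [0,2,2,1,0,2,1,0] [2,1,0,0,2] [1,0,1] [0,1,0] wb01.symm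
    _ = w [0,2,2,1,0,2,1,0,0,1,2,0,1,0,0,2] := wstep [0,2,2,1,0,2,1,0,0,1] [1,0,0,2] [0,2] [2,0] wc02
    _ = w [0,2,2,1,0,2,1,0,0,1,2,1,0,1,0,2] := wstep [0,2,2,1,0,2,1,0,0,1,2] [0,2] [0,1,0] [1,0,1] wb01
    _ = w [0,2,2,1,0,2,1,0,0,2,1,2,0,1,0,2] := wstep [0,2,2,1,0,2,1,0,0] [0,1,0,2] [1,2,1] [2,1,2] wb12
    _ = w [0,2,2,1,0,2,1,0,2,0,1,2,0,1,0,2] := wstep [0,2,2,1,0,2,1,0] [1,2,0,1,0,2] [0,2] [2,0] wc02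
    _ = w [0,2,2,1,0,2,1,2,0,0,1,2,0,1,0,2] := wstep [0,2,2,1,0,2,1] [0,1,2,0,1,0,2] [0,2] [2,0] wc02
    _ = w [0,2,2,1,0,2,1,2,0,0,1,2,1,0,1,2] := wstep [0,2,2,1,0,2,1,2,0,0,1,2] [2] [0,1,0] [1,0,1] wb01
    _ = w [0,2,2,1,0,2,1,2,0,0,2,1,2,0,1,2] := wstep [0,2,2,1,0,2,1,2,0,0] [0,1,2] [1,2,1] [2,1,2] wb12
    _ = w [0,2,2,1,0,2,1,2,0,0,2,1,0,2,1,2] := wstep [0,2,2,1,0,2,1,2,0,0,2,1] [1,2] [2,0] [0,2] wc02.symm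
    _ = w [0,2,2,1,0,2,1,2,0,0,2,1,0,1,2,1] := wstep [0,2,2,1,0,2,1,2,0,0,2,1,0] [] [2,1,2] [1,2,1] wb12.symm
    _ = w [0,2,2,1,0,1,2,1,0,0,2,1,0,1,2,1] := wstep [0,2,2,1,0] [0,0,2,1,0,1,2,1] [2,1,2] [1,2,1] wb12.symm
    _ = w [0,2,2,0,1,0,2,1,0,0,2,1,0,1,2,1] := wstep [0,2,2] [2,1,0,0,2,1,0,1,2,1] [1,0,1] [0,1,0] wb01.symm
    _ = w [0,2,2,0,1,2,0,1,0,0,2,1,0,1,2,1] := wstep [0,2,2,0,1] [1,0,0,2,1,0,1,2,1] [0,2] [2,0] wc02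
    _ = w [0,2,2,0,1,2,1,0,1,0,2,1,0,1,2,1] := wstep [0,2,2,0,1,2] [0,2,1,0,1,2,1] [0,1,0] [1,0,1] wb01
    _ = w [0,2,2,0,1,2,1,1,0,1,2,1,0,1,2,1] := wstep [0,2,2,0,1,2,1] [2,1,0,1,2,1] [0,1,0] [1,0,1] wb01
    _ = w [0,2,2,0,1,2,1,1,0,2,1,2,0,1,2,1] := wstep [0,2,2,0,1,2,1,1,0] [0,1,2,1] [1,2,1] [2,1,2] wb12
    _ = w [0,2,2,0,1,2,1,1,0,2,1,0,2,1,2,1] := wstep [0,2,2,0,1,2,1,1,0,2,1] [1,2,1] [2,0] [0,2] wc02.symm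
    _ = w [0,2,2,0,1,2,1,1,0,2,1,0,1,2,1,1] := wstep [0,2,2,0,1,2,1,1,0,2,1,0] [1] [2,1,2] [1,2,1] wb12.symm
    _ = w [0,2,2,0,1,2,1,1,2,0,1,0,1,2,1,1] := wstep [0,2,2,0,1,2,1,1] [1,0,1,2,1,1] [0,2] [2,0] wc02
    _ = w [0,2,2,0,1,2,1,1,2,1,0,1,1,2,1,1] := wstep [0,2,2,0,1,2,1,1,2] [1,2,1,1] [0,1,0] [1,0,1] wb01
    _ = w [0,2,2,0,1,2,1,2,1,2,0,1,1,2,1,1] := wstep [0,2,2,0,1,2,1] [0,1,1,2,1,1] [1,2,1] [2,1,2] wb12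
    _ = w [0,2,2,0,1,2,1,2,1,0,2,1,1,2,1,1] := wstep [0,2,2,0,1,2,1,2,1] [1,1,2,1,1] [2,0] [0,2] wc02.symm
    _ = w [0,2,0,2,1,2,1,2,1,0,2,1,1,2,1,1] := wstep [0,2] [1,2,1,2,1,0,2,1,1,2,1,1] [2,0] [0,2] wc02.symm
    _ = w [0,2,0,1,2,1,1,2,1,0,2,1,1,2,1,1] := wstep [0,2,0] [1,2,1,0,2,1,1,2,1,1] [2,1,2] [1,2,1] wb12.symm

lemma wI5 : w [2,2,0,1,2,1,3,1,3,2,1,0] = w [0,1,2,1,3,1,3,2,1,0,2,2] := by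
  calc w [2,2,0,1,2,1,3,1,3,2,1,0]
    _ = w [2,0,2,1,2,1,3,1,3,2,1,0] := wstep [2] [1,2,1,3,1,3,2,1,0] [2,0] [0,2] wc02.symm
    _ = w [0,2,2,1,2,1,3,1,3,2,1,0] := wstep [] [2,1,2,1,3,1,3,2,1,0] [2,0] [0,2] wc02.symm
    _ = w [0,2,1,2,1,1,3,1,3,2,1,0] := wstep [0,2] [1,3,1,3,2,1,0] [2,1,2] [1,2,1] wb12.symm
    _ = w [0,1,2,1,1,1,3,1,3,2,1,0] := wstep [0] [1,1,3,1,3,2,1,0] [2,1,2] [1,2,1] wb12.symm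
    _ = w [0,1,2,1,1,3,1,1,3,2,1,0] := wstep [0,1,2,1,1] [1,3,2,1,0] [1,3] [3,1] wc13
    _ = w [0,1,2,1,3,1,1,1,3,2,1,0] := wstep [0,1,2,1] [1,1,3,2,1,0] [1,3] [3,1] wc13
    _ = w [0,1,2,1,3,1,1,3,1,2,1,0] := wstep [0,1,2,1,3,1,1] [2,1,0] [1,3] [3,1] wc13
    _ = w [0,1,2,1,3,1,3,1,1,2,1,0] := wstep [0,1,2,1,3,1] [1,2,1,0] [1,3] [3,1] wc13
    _ = w [0,1,2,1,3,1,3,1,2,1,2,0] := wstep [0,1,2,1,3,1,3,1] [0] [1,2,1] [2,1,2] wb12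
    _ = w [0,1,2,1,3,1,3,1,2,1,0,2] := wstep [0,1,2,1,3,1,3,1,2,1] [] [2,0] [0,2] wc02.symm
    _ = w [0,1,2,1,3,1,3,2,1,2,0,2] := wstep [0,1,2,1,3,1,3] [0,2] [1,2,1] [2,1,2] wb12
    _ = w [0,1,2,1,3,1,3,2,1,0,2,2] := wstep [0,1,2,1,3,1,3,2,1] [2] [2,0] [0,2] wc02.symm

lemma wI6 : w [2,2,0,1,2,1,1,2,1,0] = w [0,1,2,1,1,2,1,0,2,2] := by
  calc w [2,2,0,1,2,1,1,2,1,0]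
    _ = w [2,0,2,1,2,1,1,2,1,0] := wstep [2] [1,2,1,1,2,1,0] [2,0] [0,2] wc02.symm
    _ = w [0,2,2,1,2,1,1,2,1,0] := wstep [] [2,1,2,1,1,2,1,0] [2,0] [0,2] wc02.symm
    _ = w [0,2,1,2,1,1,1,2,1,0] := wstep [0,2] [1,1,2,1,0] [2,1,2] [1,2,1] wb12.symm
    _ = w [0,1,2,1,1,1,1,2,1,0] := wstep [0] [1,1,1,2,1,0] [2,1,2] [1,2,1] wb12.symm
    _ = w [0,1,2,1,1,1,2,1,2,0] := wstep [0,1,2,1,1,1] [0] [1,2,1] [2,1,2] wb12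
    _ = w [0,1,2,1,1,1,2,1,0,2] := wstep [0,1,2,1,1,1,2,1] [] [2,0] [0,2] wc02.symm
    _ = w [0,1,2,1,1,2,1,2,0,2] := wstep [0,1,2,1,1] [0,2] [1,2,1] [2,1,2] wb12
    _ = w [0,1,2,1,1,2,1,0,2,2] := wstep [0,1,2,1,1,2,1] [2] [2,0] [0,2] wc02.symm

lemma wI7 : w [2,2,0,2] = w [0,2,2,2] := by
  calc w [2,2,0,2]
    _ = w [2,0,2,2] := wstep [2] [2] [2,0] [0,2] wc02.symm
    _ = w [0,2,2,2] := wstep [] [2,2] [2,0] [0,2] wc02.symm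

lemma wI8 : w [2,2,0,1,2,1,0,0,1,2,1,0,0,1,2,1,1,2,1,0] = w [0,1,2,1,1,2,1,0,0,1,2,1,0,0,1,2,1,0,2,2] := by
  calc w [2,2,0,1,2,1,0,0,1,2,1,0,0,1,2,1,1,2,1,0]
    _ = w [2,0,2,1,2,1,0,0,1,2,1,0,0,1,2,1,1,2,1,0] := wstep [2] [1,2,1,0,0,1,2,1,0,0,1,2,1,1,2,1,0] [2,0] [0,2] wc02.symm
    _ = w [0,2,2,1,2,1,0,0,1,2,1,0,0,1,2,1,1,2,1,0] := wstep [] [2,1,2,1,0,0,1,2,1,0,0,1,2,1,1,2,1,0] [2,0] [0,2] wc02.symm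
    _ = w [0,2,1,2,1,1,0,0,1,2,1,0,0,1,2,1,1,2,1,0] := wstep [0,2] [1,0,0,1,2,1,0,0,1,2,1,1,2,1,0] [2,1,2] [1,2,1] wb12.symm
    _ = w [0,1,2,1,1,1,0,0,1,2,1,0,0,1,2,1,1,2,1,0] := wstep [0] [1,1,0,0,1,2,1,0,0,1,2,1,1,2,1,0] [2,1,2] [1,2,1] wb12.symm
    _ = w [0,1,2,1,1,1,0,0,2,1,2,0,0,1,2,1,1,2,1,0] := wstep [0,1,2,1,1,1,0,0] [0,0,1,2,1,1,2,1,0] [1,2,1] [2,1,2] wb12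
    _ = w [0,1,2,1,1,1,0,2,0,1,2,0,0,1,2,1,1,2,1,0] := wstep [0,1,2,1,1,1,0] [1,2,0,0,1,2,1,1,2,1,0] [0,2] [2,0] wc02
    _ = w [0,1,2,1,1,1,2,0,0,1,2,0,0,1,2,1,1,2,1,0] := wstep [0,1,2,1,1,1] [0,1,2,0,0,1,2,1,1,2,1,0] [0,2] [2,0] wc02
    _ = w [0,1,2,1,1,1,2,0,0,1,0,2,0,1,2,1,1,2,1,0] := wstep [0,1,2,1,1,1,2,0,0,1] [0,1,2,1,1,2,1,0] [2,0] [0,2] wc02.symm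
    _ = w [0,1,2,1,1,1,2,0,1,0,1,2,0,1,2,1,1,2,1,0] := wstep [0,1,2,1,1,1,2,0] [2,0,1,2,1,1,2,1,0] [0,1,0] [1,0,1] wb01
    _ = w [0,1,2,1,1,1,2,1,0,1,1,2,0,1,2,1,1,2,1,0] := wstep [0,1,2,1,1,1,2] [1,2,0,1,2,1,1,2,1,0] [0,1,0] [1,0,1] wb01
    _ = w [0,1,2,1,1,2,1,2,0,1,1,2,0,1,2,1,1,2,1,0] := wstep [0,1,2,1,1] [0,1,1,2,0,1,2,1,1,2,1,0] [1,2,1] [2,1,2] wb12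
    _ = w [0,1,2,1,1,2,1,0,2,1,1,2,0,1,2,1,1,2,1,0] := wstep [0,1,2,1,1,2,1] [1,1,2,0,1,2,1,1,2,1,0] [2,0] [0,2] wc02.symm
    _ = w [0,1,2,1,1,2,1,0,2,1,1,0,2,1,2,1,1,2,1,0] := wstep [0,1,2,1,1,2,1,0,2,1,1] [1,2,1,1,2,1,0] [2,0] [0,2] wc02.symm
    _ = w [0,1,2,1,1,2,1,0,2,1,1,0,1,2,1,1,1,2,1,0] := wstep [0,1,2,1,1,2,1,0,2,1,1,0] [1,1,2,1,0] [2,1,2] [1,2,1] wb12.symm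
    _ = w [0,1,2,1,1,2,1,0,2,1,1,0,1,2,1,1,2,1,2,0] := wstep [0,1,2,1,1,2,1,0,2,1,1,0,1,2,1,1] [0] [1,2,1] [2,1,2] wb12
    _ = w [0,1,2,1,1,2,1,0,2,1,1,0,1,2,1,1,2,1,0,2] := wstep [0,1,2,1,1,2,1,0,2,1,1,0,1,2,1,1,2,1] [] [2,0] [0,2] wc02.symm
    _ = w [0,1,2,1,1,2,1,0,2,1,1,0,1,2,1,2,1,2,0,2] := wstep [0,1,2,1,1,2,1,0,2,1,1,0,1,2,1] [0,2] [1,2,1] [2,1,2] wb12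
    _ = w [0,1,2,1,1,2,1,0,2,1,1,0,1,2,1,2,1,0,2,2] := wstep [0,1,2,1,1,2,1,0,2,1,1,0,1,2,1,2,1] [2] [2,0] [0,2] wc02.symm
    _ = w [0,1,2,1,1,2,1,0,2,1,0,1,0,2,1,2,1,0,2,2] := wstep [0,1,2,1,1,2,1,0,2,1] [2,1,2,1,0,2,2] [1,0,1] [0,1,0] wb01.symm
    _ = w [0,1,2,1,1,2,1,0,2,1,0,1,2,0,1,2,1,0,2,2] := wstep [0,1,2,1,1,2,1,0,2,1,0,1] [1,2,1,0,2,2] [0,2] [2,0] wc02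
    _ = w [0,1,2,1,1,2,1,0,2,0,1,0,2,0,1,2,1,0,2,2] := wstep [0,1,2,1,1,2,1,0,2] [2,0,1,2,1,0,2,2] [1,0,1] [0,1,0] wb01.symm
    _ = w [0,1,2,1,1,2,1,0,2,0,1,2,0,0,1,2,1,0,2,2] := wstep [0,1,2,1,1,2,1,0,2,0,1] [0,1,2,1,0,2,2] [0,2] [2,0] wc02
    _ = w [0,1,2,1,1,2,1,0,0,2,1,2,0,0,1,2,1,0,2,2] := wstep [0,1,2,1,1,2,1,0] [1,2,0,0,1,2,1,0,2,2] [2,0] [0,2] wc02.symm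
    _ = w [0,1,2,1,1,2,1,0,0,1,2,1,0,0,1,2,1,0,2,2] := wstep [0,1,2,1,1,2,1,0,0] [0,0,1,2,1,0,2,2] [2,1,2] [1,2,1] wb12.symm

lemma XW : X = w [0,1,2,1,3,1,3,2,1,0] := by simp [X, w, mul_assoc]
lemma SW : S = w [0,1,2,1,1,2,1,0] := by simp [S, w, mul_assoc]
lemma YW : Y = w [0,2] := by simp [Y, w, mul_assoc]
lemma ZW : Z = w [0,1,2,1,0,0,1,2,1,0] := by simp [Z, w, mul_assoc]

abbrev G1 : B5 := w [2,1,1,2,1,1]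
abbrev H1 : B5 := w [2,2]

lemma g1X : SemiconjBy G1 X X := by
  show G1 * X = X * G1
  rw [XW]; simp only [← w_append]; exact wI1
lemma g1S : SemiconjBy G1 S S := by
  show G1 * S = S * G1
  rw [SW]; simp only [← w_append]; exact wI2
lemma g1Z : SemiconjBy G1 Z Z := by
  show G1 * Z = Z * G1
  rw [ZW]; simp only [← w_append]; exact wI3
lemma g1SY : SemiconjBy G1 (S * Y) (Y * S) := by
  show G1 * (S * Y) = (Y * S) * G1
  rw [SW, YW]; simp only [← w_append]; exact wI4
lemma h1X : SemiconjBy H1 X X := by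
  show H1 * X = X * H1
  rw [XW]; simp only [← w_append]; exact wI5
lemma h1S : SemiconjBy H1 S S := by
  show H1 * S = S * H1
  rw [SW]; simp only [← w_append]; exact wI6
lemma h1Y : SemiconjBy H1 Y Y := by
  show H1 * Y = Y * H1
  rw [YW]; simp only [← w_append]; exact wI7
lemma h1ZS : SemiconjBy H1 (Z * S) (S * Z) := by
  show H1 * (Z * S) = (S * Z) * H1
  rw [ZW, SW]; simp only [← w_append]; exact wI8

lemma key1 (a b c : ℕ) : G1 * deltaABC (a+1) b c = deltaABC a (b+1) c * G1 := by
  have h : SemiconjBy G1 (X * S^a * (S * Y) * S^b * Z * S^c)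
      (X * S^a * (Y * S) * S^b * Z * S^c) :=
    (((((g1X.mul_right (g1S.pow_right a)).mul_right g1SY).mul_right
      (g1S.pow_right b)).mul_right g1Z).mul_right (g1S.pow_right c))
  have e1 : X * S^a * (S * Y) * S^b * Z * S^c = deltaABC (a+1) b c := by
    rw [deltaABC, pow_succ]; group
  have e2 : X * S^a * (Y * S) * S^b * Z * S^c = deltaABC a (b+1) c := by
    rw [deltaABC, pow_succ]; group
  rw [← e1, ← e2]; exact h

lemma key2 (a b c : ℕ) : H1 * deltaABC a b (c+1) = deltaABC a (b+1) c * H1 := by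
  have h : SemiconjBy H1 (X * S^a * Y * S^b * (Z * S) * S^c)
      (X * S^a * Y * S^b * (S * Z) * S^c) :=
    (((((h1X.mul_right (h1S.pow_right a)).mul_right h1Y).mul_right
      (h1S.pow_right b)).mul_right h1ZS).mul_right (h1S.pow_right c))
  have e1 : X * S^a * Y * S^b * (Z * S) * S^c = deltaABC a b (c+1) := by
    rw [deltaABC, pow_succ]; group
  have e2 : X * S^a * Y * S^b * (S * Z) * S^c = deltaABC a (b+1) c := by
    rw [deltaABC, pow_succ]; group
  rw [← e1, ← e2]; exact h

lemma conj_move_c : ∀ c a b, ∃ g : B5, g * deltaABC a b c * g⁻¹ = deltaABC a (b+c) 0 := by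
  intro c
  induction c with
  | zero => intro a b; exact ⟨1, by simp⟩
  | succ n ih =>
    intro a b
    obtain ⟨g, hg⟩ := ih a (b+1)
    refine ⟨g * H1, ?_⟩
    have h1 : H1 * deltaABC a b (n+1) * H1⁻¹ = deltaABC a (b+1) n := by
      rw [key2]; group
    calc g * H1 * deltaABC a b (n+1) * (g * H1)⁻¹
        = g * (H1 * deltaABC a b (n+1) * H1⁻¹) * g⁻¹ := by group
      _ = g * deltaABC a (b+1) n * g⁻¹ := by rw [h1]
      _ = deltaABC a (b+1+n) 0 := hg
      _ = deltaABC a (b+(n+1)) 0 := by rw [show b+1+n = b+(n+1) by omega]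

lemma conj_move_b : ∀ b a, ∃ g : B5, g * deltaABC a b 0 * g⁻¹ = deltaABC (a+b) 0 0 := by
  intro b
  induction b with
  | zero => intro a; exact ⟨1, by simp⟩
  | succ n ih =>
    intro a
    obtain ⟨g, hg⟩ := ih (a+1)
    refine ⟨g * G1⁻¹, ?_⟩
    have h1 : G1⁻¹ * deltaABC a (n+1) 0 * G1⁻¹⁻¹ = deltaABC (a+1) n 0 := by
      calc G1⁻¹ * deltaABC a (n+1) 0 * G1⁻¹⁻¹
          = G1⁻¹ * (deltaABC a (n+1) 0 * G1) := by group
        _ = G1⁻¹ * (G1 * deltaABC (a+1) n 0) := by rw [← key1]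
        _ = deltaABC (a+1) n 0 := by group
    calc g * G1⁻¹ * deltaABC a (n+1) 0 * (g * G1⁻¹)⁻¹
        = g * (G1⁻¹ * deltaABC a (n+1) 0 * G1⁻¹⁻¹) * g⁻¹ := by group
      _ = g * deltaABC (a+1) n 0 * g⁻¹ := by rw [h1]
      _ = deltaABC (a+1+n) 0 0 := hg
      _ = deltaABC (a+(n+1)) 0 0 := by rw [show a+1+n = a+(n+1) by omega]

lemma conj_canon (a b c : ℕ) : ∃ g : B5, g * deltaABC a b c * g⁻¹ = deltaABC (a+b+c) 0 0 := by
  obtain ⟨g, hg⟩ := conj_move_c c a b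
  obtain ⟨g', hg'⟩ := conj_move_b (b+c) a
  refine ⟨g' * g, ?_⟩
  calc g' * g * deltaABC a b c * (g' * g)⁻¹
      = g' * (g * deltaABC a b c * g⁻¹) * g'⁻¹ := by group
    _ = g' * deltaABC a (b+c) 0 * g'⁻¹ := by rw [hg]
    _ = deltaABC (a+(b+c)) 0 0 := hg'
    _ = deltaABC (a+b+c) 0 0 := by rw [add_assoc]


/-- For every odd `L ≥ 5` and any two triples of nonnegative integers summing to
`(L − 5)/2`, the braids `δ_{a,b,c}` and `δ_{a',b',c'}` are conjugate in `B_5`. -/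
theorem deltaABC_conj_deltaABC (L a b c a' b' c' : ℕ) (hodd : Odd L) (hL : 5 ≤ L)
    (habc : a + b + c = (L - 5) / 2) (habc' : a' + b' + c' = (L - 5) / 2) :
    ∃ g : B5, g * deltaABC a b c * g⁻¹ = deltaABC a' b' c' := by
  obtain ⟨g, hg⟩ := conj_canon a b c
  obtain ⟨g', hg'⟩ := conj_canon a' b' c'
  have hsum : a + b + c = a' + b' + c' := habc.trans habc'.symm
  refine ⟨g'⁻¹ * g, ?_⟩
  rw [hsum] at hg
  calc g'⁻¹ * g * deltaABC a b c * (g'⁻¹ * g)⁻¹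
      = g'⁻¹ * (g * deltaABC a b c * g⁻¹) * g' := by group
    _ = g'⁻¹ * deltaABC (a'+b'+c') 0 0 * g' := by rw [hg]
    _ = g'⁻¹ * (g' * deltaABC a' b' c' * g'⁻¹) * g' := by rw [hg']
    _ = deltaABC a' b' c' := by group
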